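/- Let n ≥ 1, let f(z,w) = w^n + f₁(z)w^{n-1} + ⋯ + f_n(z) ∈ ℂ[z,w] be monic of degree n in w and squarefree, and let B = {z ∈ ℂ : f(z,·) has fewer than n distinct roots}. For every z₀ ∈ ℂ ∖ B there exist ε > 0 and complex-analytic functions w₁, …, w_n defined on the open ball of radius ε about z₀ such that for every z in that ball the values w₁(z), …, w_n(z) are pairwise distinct and are exactly the set of roots of the polynomial w ↦ f(z,w). -/

import Mathlib

open Polynomial Metric

noncomputable section StatementTwoAux

/-- Evaluation of a two-variable polynomial as a function on `ℂ × ℂ`. -/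
private def Fp (g : Polynomial (Polynomial ℂ)) : ℂ × ℂ → ℂ :=
  fun p => Polynomial.eval p.2 (g.map (Polynomial.evalRingHom p.1))

private lemma Fp_eq_sum (g : Polynomial (Polynomial ℂ)) (p : ℂ × ℂ) :
    Fp g p = ∑ k ∈ Finset.range (g.natDegree + 1),
      Polynomial.eval p.1 (g.coeff k) * p.2 ^ k := by
  rw [Fp, Polynomial.eval_eq_sum_range' (n := g.natDegree + 1)
    (lt_of_le_of_lt Polynomial.natDegree_map_le (Nat.lt_succ_self _))]
  simp [Polynomial.coeff_map]

private lemma Fp_analytic (g : Polynomial (Polynomial ℂ)) (p : ℂ × ℂ) :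
    AnalyticAt ℂ (Fp g) p := by
  have h : Fp g = fun p : ℂ × ℂ => ∑ k ∈ Finset.range (g.natDegree + 1),
      Polynomial.eval p.1 (g.coeff k) * p.2 ^ k := funext (Fp_eq_sum g)
  rw [h]
  apply Finset.analyticAt_fun_sum
  intro k _
  have h1 : AnalyticAt ℂ (fun q : ℂ × ℂ => Polynomial.eval q.1 (g.coeff k)) p :=
    ((Polynomial.differentiable (g.coeff k)).analyticAt p.1).comp analyticAt_fst
  exact h1.mul (analyticAt_snd.pow k)

private lemma Fp_hasDerivAt (g : Polynomial (Polynomial ℂ)) (p : ℂ × ℂ) :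
    HasDerivAt (fun w => Fp g (p.1, w)) (Fp (derivative g) p) p.2 := by
  have := (g.map (Polynomial.evalRingHom p.1)).hasDerivAt p.2
  simpa [Fp, Polynomial.derivative_map] using this

private lemma clm_decomp (T : ℂ × ℂ →L[ℂ] ℂ) (x y : ℂ) :
    T (x, y) = x * T (1, 0) + y * T (0, 1) := by
  have h : (x, y) = x • ((1 : ℂ), (0 : ℂ)) + y • ((0 : ℂ), (1 : ℂ)) := by
    simp [Prod.ext_iff]
  rw [h, map_add, map_smul, map_smul, smul_eq_mul, smul_eq_mul]

private lemma Fp_fderiv_snd (g : Polynomial (Polynomial ℂ)) (p : ℂ × ℂ) :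
    fderiv ℂ (Fp g) p (0, 1) = Fp (derivative g) p := by
  have hF : HasFDerivAt (Fp g) (fderiv ℂ (Fp g) p) p :=
    (Fp_analytic g p).differentiableAt.hasFDerivAt
  have hι : HasDerivAt (fun w : ℂ => (p.1, w)) ((0 : ℂ), (1 : ℂ)) p.2 :=
    (hasDerivAt_const p.2 p.1).prodMk (hasDerivAt_id p.2)
  have hF' : HasFDerivAt (Fp g) (fderiv ℂ (Fp g) p) (p.1, p.2) := by
    simpa using hF
  have hcomp := hF'.comp_hasDerivAt p.2 hι
  exact HasDerivAt.unique hcomp (Fp_hasDerivAt g p)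

/-- The shear equivalence `(x, y) ↦ (x, a x + b y)` for `b ≠ 0`. -/
private def sheer (a b : ℂ) (hb : b ≠ 0) : (ℂ × ℂ) ≃L[ℂ] (ℂ × ℂ) :=
  LinearEquiv.toContinuousLinearEquiv <| LinearEquiv.ofLinear
    ((LinearMap.fst ℂ ℂ ℂ).prod (a • LinearMap.fst ℂ ℂ ℂ + b • LinearMap.snd ℂ ℂ ℂ))
    ((LinearMap.fst ℂ ℂ ℂ).prod (b⁻¹ • (LinearMap.snd ℂ ℂ ℂ - a • LinearMap.fst ℂ ℂ ℂ)))
    (by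
      apply LinearMap.ext; rintro ⟨x, y⟩
      simp [LinearMap.prod_apply, smul_eq_mul]
      field_simp
      ring)
    (by
      apply LinearMap.ext; rintro ⟨x, y⟩
      simp [LinearMap.prod_apply, smul_eq_mul]
      field_simp)

private lemma sheer_apply (a b : ℂ) (hb : b ≠ 0) (q : ℂ × ℂ) :
    sheer a b hb q = (q.1, a * q.1 + b * q.2) := by
  simp [sheer, LinearMap.prod_apply, smul_eq_mul]

/-- The map `Φ(z, w) = (z, F(z, w))`. -/
private def Phi (g : Polynomial (Polynomial ℂ)) : ℂ × ℂ → ℂ × ℂ :=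
  fun p => (p.1, Fp g p)

private lemma Phi_strict (g : Polynomial (Polynomial ℂ)) (p : ℂ × ℂ)
    (hb : Fp (derivative g) p ≠ 0) :
    HasStrictFDerivAt (Phi g)
      ((sheer (fderiv ℂ (Fp g) p (1, 0)) (Fp (derivative g) p) hb : (ℂ × ℂ) ≃L[ℂ] (ℂ × ℂ))
        : (ℂ × ℂ) →L[ℂ] (ℂ × ℂ)) p := by
  have hF := (Fp_analytic g p).hasStrictFDerivAt
  have h1 : HasStrictFDerivAt (fun q : ℂ × ℂ => q.1) (ContinuousLinearMap.fst ℂ ℂ ℂ) p :=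
    (ContinuousLinearMap.fst ℂ ℂ ℂ).hasStrictFDerivAt
  have h2 := h1.prodMk hF
  have heq : ((sheer (fderiv ℂ (Fp g) p (1, 0)) (Fp (derivative g) p) hb : (ℂ × ℂ) ≃L[ℂ] (ℂ × ℂ))
        : (ℂ × ℂ) →L[ℂ] (ℂ × ℂ))
      = (ContinuousLinearMap.fst ℂ ℂ ℂ).prod (fderiv ℂ (Fp g) p) := by
    apply ContinuousLinearMap.ext; rintro ⟨x, y⟩
    have hd := clm_decomp (fderiv ℂ (Fp g) p) x y
    rw [Fp_fderiv_snd] at hd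
    have h3 := sheer_apply (fderiv ℂ (Fp g) p (1, 0)) (Fp (derivative g) p) hb (x, y)
    simp only [ContinuousLinearEquiv.coe_coe] at h3 ⊢
    rw [h3, ContinuousLinearMap.prod_apply]
    exact Prod.ext rfl (by simp [hd]; ring)
  rw [heq]
  exact h2

private lemma implicit_root (g : Polynomial (Polynomial ℂ)) (z₀ v : ℂ)
    (h0 : Polynomial.eval v (g.map (Polynomial.evalRingHom z₀)) = 0)
    (hd : Polynomial.eval v (Polynomial.derivative (g.map (Polynomial.evalRingHom z₀))) ≠ 0) :
    ∃ ε > (0 : ℝ), ∃ w : ℂ → ℂ, AnalyticOnNhd ℂ w (ball z₀ ε) ∧ w z₀ = v ∧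
      ∀ z ∈ ball z₀ ε, Polynomial.eval (w z) (g.map (Polynomial.evalRingHom z)) = 0 := by
  set p₀ : ℂ × ℂ := (z₀, v) with hp₀
  have hb₀ : Fp (derivative g) p₀ ≠ 0 := by
    simpa [Fp, Polynomial.derivative_map] using hd
  have hΦ := Phi_strict g p₀ hb₀
  set Ψ := hΦ.toOpenPartialHomeomorph (Phi g) with hΨ
  have hsrc : p₀ ∈ Ψ.source := hΦ.mem_toOpenPartialHomeomorph_source
  have hcoe : ⇑Ψ = Phi g := hΦ.toOpenPartialHomeomorph_coe
  have hΦp₀ : Phi g p₀ = (z₀, 0) := by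
    simp only [Phi, hp₀]
    exact Prod.ext rfl h0
  have htgt : ((z₀ : ℂ), (0 : ℂ)) ∈ Ψ.target := by
    rw [← hΦp₀]; exact hΦ.image_mem_toOpenPartialHomeomorph_target
  have hsymm0 : Ψ.symm (z₀, 0) = p₀ := by
    rw [← hΦp₀, ← hcoe]; exact Ψ.left_inv hsrc
  have hcont : Continuous (Fp (derivative g)) :=
    continuous_iff_continuousAt.2 fun q => (Fp_analytic _ q).continuousAt
  have hUopen : IsOpen {q : ℂ × ℂ | Fp (derivative g) q ≠ 0} := by
    have : {q : ℂ × ℂ | Fp (derivative g) q ≠ 0} = Fp (derivative g) ⁻¹' ({0}ᶜ) := rfl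
    rw [this]; exact isOpen_compl_singleton.preimage hcont
  have hW : IsOpen (Ψ.target ∩ Ψ.symm ⁻¹' {q : ℂ × ℂ | Fp (derivative g) q ≠ 0}) :=
    Ψ.isOpen_inter_preimage_symm hUopen
  have hV : IsOpen ((fun z : ℂ => ((z : ℂ), (0 : ℂ))) ⁻¹'
      (Ψ.target ∩ Ψ.symm ⁻¹' {q : ℂ × ℂ | Fp (derivative g) q ≠ 0})) :=
    hW.preimage (continuous_id.prodMk continuous_const)
  have hz₀V : z₀ ∈ (fun z : ℂ => ((z : ℂ), (0 : ℂ))) ⁻¹'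
      (Ψ.target ∩ Ψ.symm ⁻¹' {q : ℂ × ℂ | Fp (derivative g) q ≠ 0}) := by
    refine ⟨htgt, ?_⟩
    simp only [Set.mem_preimage, hsymm0, Set.mem_setOf_eq]
    exact hb₀
  obtain ⟨ε, hε, hball⟩ := Metric.isOpen_iff.1 hV z₀ hz₀V
  refine ⟨ε, hε, fun z => (Ψ.symm (z, 0)).2, ?_, by simpa using congrArg Prod.snd hsymm0, ?_⟩
  · -- analyticity
    refine DifferentiableOn.analyticOnNhd (fun z hz => ?_) isOpen_ball
    obtain ⟨hzt, hzU⟩ := hball hz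
    have hbq : Fp (derivative g) (Ψ.symm (z, 0)) ≠ 0 := hzU
    have hder := Phi_strict g (Ψ.symm (z, 0)) hbq
    have hΨq : HasFDerivAt (↑Ψ)
        ((sheer (fderiv ℂ (Fp g) (Ψ.symm (z, 0)) (1, 0))
          (Fp (derivative g) (Ψ.symm (z, 0))) hbq : (ℂ × ℂ) ≃L[ℂ] (ℂ × ℂ))
          : (ℂ × ℂ) →L[ℂ] (ℂ × ℂ)) (Ψ.symm (z, 0)) := by
      rw [hcoe]; exact hder.hasFDerivAt
    have hsym := Ψ.hasFDerivAt_symm hzt hΨq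
    have hin : DifferentiableAt ℂ (fun z : ℂ => ((z : ℂ), (0 : ℂ))) z :=
      differentiableAt_id.prodMk (differentiableAt_const _)
    have hcomp : DifferentiableAt ℂ (fun z : ℂ => Ψ.symm (z, 0)) z :=
      hsym.differentiableAt.comp z hin
    exact hcomp.snd.differentiableWithinAt
  · -- roots
    intro z hz
    obtain ⟨hzt, _⟩ := hball hz
    have hq1 : Phi g (Ψ.symm (z, 0)) = (z, 0) := by
      rw [← hcoe]; exact Ψ.right_inv hzt
    have h1 : (Ψ.symm (z, 0)).1 = z := congrArg Prod.fst hq1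
    have h2 : Fp g (Ψ.symm (z, 0)) = 0 := congrArg Prod.snd hq1
    rw [Fp] at h2
    rw [h1] at h2
    exact h2

end StatementTwoAux

set_option maxHeartbeats 2000000 in
theorem statement2 (n : ℕ) (hn : 1 ≤ n) (f : Polynomial (Polynomial ℂ))
    (hmonic : f.Monic) (hdeg : f.natDegree = n) (hsq : Squarefree f)
    (z₀ : ℂ)
    (hz₀ : ¬ ({w : ℂ | Polynomial.eval w (f.map (Polynomial.evalRingHom z₀)) = 0}).ncard < n) :
    ∃ ε > (0 : ℝ), ∃ w : Fin n → ℂ → ℂ,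
      (∀ i, AnalyticOnNhd ℂ (w i) (Metric.ball z₀ ε)) ∧
      ∀ z ∈ Metric.ball z₀ ε,
        (∀ i j : Fin n, i ≠ j → w i z ≠ w j z) ∧
        (∀ v : ℂ, Polynomial.eval v (f.map (Polynomial.evalRingHom z)) = 0 ↔ ∃ i, w i z = v) := by
  classical
  have : Nonempty (Fin n) := ⟨⟨0, hn⟩⟩
  set P : ℂ → Polynomial ℂ := fun z => f.map (Polynomial.evalRingHom z) with hP
  have hPmonic : ∀ z, (P z).Monic := fun z => hmonic.map _
  have hPdeg : ∀ z, (P z).natDegree = n := fun z => by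
    rw [hP]; rw [hmonic.natDegree_map]; exact hdeg
  have hPne : ∀ z, P z ≠ 0 := fun z => (hPmonic z).ne_zero
  -- the root set at z₀
  have hset : {w : ℂ | Polynomial.eval w (P z₀) = 0} = ↑(P z₀).roots.toFinset := by
    ext w
    simp [Multiset.mem_toFinset, Polynomial.mem_roots, hPne z₀, Polynomial.IsRoot]
  have hn' : n ≤ (P z₀).roots.toFinset.card := by
    by_contra h
    push_neg at h
    exact hz₀ (by rw [hset, Set.ncard_coe_finset]; exact h)
  have hcard1 : (P z₀).roots.toFinset.card ≤ Multiset.card (P z₀).roots :=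
    Multiset.toFinset_card_le _
  have hcard2 : Multiset.card (P z₀).roots ≤ n :=
    le_trans ((P z₀).card_roots') (le_of_eq (hPdeg z₀))
  have hcardeq : (P z₀).roots.toFinset.card = n :=
    le_antisymm (hcard1.trans hcard2) hn'
  have hnodup : (P z₀).roots.Nodup := by
    rw [← Multiset.toFinset_card_eq_card_iff_nodup]
    exact le_antisymm hcard1 (hcard2.trans hcardeq.ge)
  -- enumerate the roots
  obtain ⟨r, hrinj, hrmem⟩ : ∃ r : Fin n → ℂ, Function.Injective r ∧
      ∀ i, r i ∈ (P z₀).roots := by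
    let e := Finset.equivFinOfCardEq hcardeq
    refine ⟨fun i => ((e.symm i : { x // x ∈ (P z₀).roots.toFinset }) : ℂ), ?_, ?_⟩
    · intro i j h
      exact e.symm.injective (Subtype.ext h)
    · intro i
      exact Multiset.mem_toFinset.mp (e.symm i).2
  have hrroot : ∀ i, Polynomial.eval (r i) (P z₀) = 0 := fun i =>
    Polynomial.isRoot_of_mem_roots (hrmem i)
  have hrderiv : ∀ i, Polynomial.eval (r i) (Polynomial.derivative (P z₀)) ≠ 0 := by
    intro i hcontra
    have hroot : ∀ m ≤ 1, (Polynomial.derivative^[m] (P z₀)).IsRoot (r i) := by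
      intro m hm
      interval_cases m
      · exact hrroot i
      · simpa [Function.iterate_one, Polynomial.IsRoot] using hcontra
    have hnzd : ∀ m : ℕ, m ≤ 1 → m ≠ 0 → (m : ℂ) ∈ nonZeroDivisors ℂ := by
      intro m hm hm0
      interval_cases m
      · exact absurd rfl hm0
      · exact mem_nonZeroDivisors_of_ne_zero (by norm_num)
    have hlt := Polynomial.lt_rootMultiplicity_of_isRoot_iterate_derivative_of_mem_nonZeroDivisors'
      (hPne z₀) hroot hnzd
    have hcount : (P z₀).roots.count (r i) = 1 :=
      Multiset.count_eq_one_of_mem hnodup (hrmem i)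
    rw [← Polynomial.count_roots, hcount] at hlt
    omega
  -- local analytic root functions
  have H : ∀ i : Fin n, ∃ ε > (0 : ℝ), ∃ w : ℂ → ℂ,
      AnalyticOnNhd ℂ w (ball z₀ ε) ∧ w z₀ = r i ∧
      ∀ z ∈ ball z₀ ε, Polynomial.eval (w z) (f.map (Polynomial.evalRingHom z)) = 0 :=
    fun i => implicit_root f z₀ (r i) (hrroot i) (hrderiv i)
  choose εf hεf wf hwa hw0 hwroot using H
  -- separation constant
  obtain ⟨δ, hδpos, hδ⟩ : ∃ δ > (0 : ℝ), ∀ i j : Fin n, i ≠ j → 2 * δ ≤ dist (r i) (r j) := by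
    by_cases hc : ∃ p : Fin n × Fin n, p.1 ≠ p.2
    · obtain ⟨p₀, hp₀⟩ := hc
      have hne : Nonempty {p : Fin n × Fin n // p.1 ≠ p.2} := ⟨⟨p₀, hp₀⟩⟩
      obtain ⟨a, ha⟩ := Finite.exists_min
        (fun p : {p : Fin n × Fin n // p.1 ≠ p.2} => dist (r p.1.1) (r p.1.2))
      have hdpos : 0 < dist (r a.1.1) (r a.1.2) := dist_pos.mpr fun h => a.2 (hrinj h)
      refine ⟨dist (r a.1.1) (r a.1.2) / 2, by linarith, fun i j hij => ?_⟩
      have := ha ⟨(i, j), hij⟩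
      simp only at this
      linarith
    · push_neg at hc
      exact ⟨1, one_pos, fun i j hij => absurd (hc (i, j)) hij⟩
  -- shrink by continuity
  have Hη : ∀ i : Fin n, ∃ η > (0 : ℝ), ∀ z, dist z z₀ < η → dist (wf i z) (r i) < δ := by
    intro i
    have hc : ContinuousAt (wf i) z₀ :=
      ((hwa i) z₀ (mem_ball_self (hεf i))).continuousAt
    obtain ⟨η, hη, h⟩ := Metric.continuousAt_iff.mp hc δ hδpos
    exact ⟨η, hη, fun z hz => by have := h hz; rwa [hw0 i] at this⟩
  choose ηf hηf hηball using Hη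
  -- the final radius
  set ε := Finset.univ.inf' Finset.univ_nonempty (fun i : Fin n => min (εf i) (ηf i)) with hε
  have hεpos : 0 < ε := by
    rw [hε, Finset.lt_inf'_iff]
    exact fun i _ => lt_min (hεf i) (hηf i)
  have hεle1 : ∀ i, ε ≤ εf i := fun i =>
    le_trans (Finset.inf'_le _ (Finset.mem_univ i)) (min_le_left _ _)
  have hεle2 : ∀ i, ε ≤ ηf i := fun i =>
    le_trans (Finset.inf'_le _ (Finset.mem_univ i)) (min_le_right _ _)
  have hballmem : ∀ i, ∀ z ∈ ball z₀ ε, z ∈ ball z₀ (εf i) := fun i z hz =>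
    mem_ball.mpr (lt_of_lt_of_le (mem_ball.mp hz) (hεle1 i))
  have hdistinct : ∀ z ∈ ball z₀ ε, ∀ i j : Fin n, i ≠ j → wf i z ≠ wf j z := by
    intro z hz i j hij heq
    have h1 : dist (wf i z) (r i) < δ := hηball i z (lt_of_lt_of_le (mem_ball.mp hz) (hεle2 i))
    have h2 : dist (wf j z) (r j) < δ := hηball j z (lt_of_lt_of_le (mem_ball.mp hz) (hεle2 j))
    have h3 : 2 * δ ≤ dist (r i) (r j) := hδ i j hij
    have h5 : dist (r i) (r j) ≤ dist (r i) (wf i z) + dist (wf j z) (r j) := by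
      calc dist (r i) (r j) ≤ dist (r i) (wf i z) + dist (wf i z) (r j) := dist_triangle _ _ _
        _ = dist (r i) (wf i z) + dist (wf j z) (r j) := by rw [heq]
    rw [dist_comm] at h1
    linarith
  refine ⟨ε, hεpos, wf, fun i => (hwa i).mono (ball_subset_ball (hεle1 i)), fun z hz => ?_⟩
  refine ⟨hdistinct z hz, fun v => ?_⟩
  have hwinj : Function.Injective (fun i => wf i z) := by
    intro i j h
    by_contra hij
    exact hdistinct z hz i j hij h
  have hroots : ∀ i, wf i z ∈ (P z).roots.toFinset := fun i =>
    Multiset.mem_toFinset.mpr ((Polynomial.mem_roots (hPne z)).mpr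
      (hwroot i z (hballmem i z hz)))
  have hsub : Finset.image (fun i => wf i z) Finset.univ ⊆ (P z).roots.toFinset := by
    intro x hx
    obtain ⟨i, _, rfl⟩ := Finset.mem_image.mp hx
    exact hroots i
  have hScard : (Finset.image (fun i => wf i z) Finset.univ).card = n := by
    rw [Finset.card_image_of_injective _ hwinj, Finset.card_univ, Fintype.card_fin]
  have hTcard : (P z).roots.toFinset.card ≤ n :=
    le_trans (Multiset.toFinset_card_le _) (le_trans ((P z).card_roots') (le_of_eq (hPdeg z)))
  have hST : Finset.image (fun i => wf i z) Finset.univ = (P z).roots.toFinset :=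
    Finset.eq_of_subset_of_card_le hsub (by rw [hScard]; exact hTcard)
  constructor
  · intro hv
    have : v ∈ (P z).roots.toFinset :=
      Multiset.mem_toFinset.mpr ((Polynomial.mem_roots (hPne z)).mpr hv)
    rw [← hST] at this
    obtain ⟨i, _, hi⟩ := Finset.mem_image.mp this
    exact ⟨i, hi⟩
  · rintro ⟨i, rfl⟩
    exact hwroot i z (hballmem i z hz)
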